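/- arXiv:2308.01411 — 2 statements merged into one kernel-verified Lean document; each statement's English description precedes it below -/
import Mathlib

section
/- Suppose a sequence (v_i)_{i∈ℤ} of reals is updated by v_i^{new} = v_i − a_{i−1/2} (v_i − v_{i−1}) + b_{i+1/2} (v_{i+1} − v_i), where for all i the coefficients satisfy a_{i+1/2} ≥ 0, b_{i+1/2} ≥ 0 and a_{i+1/2} + b_{i+1/2} ≤ 1. Then the total variation does not increase: ∑_{i∈ℤ} |v_{i+1}^{new} − v_i^{new}| ≤ ∑_{i∈ℤ} |v_{i+1} − v_i|, provided both sums are finite. -/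
set_option maxHeartbeats 1000000 in
/-- Harten's lemma: for an incremental-form update
`vⁿᵉʷ_i = v_i − a_{i−1/2}(v_i − v_{i−1}) + b_{i+1/2}(v_{i+1} − v_i)` with
`a_{i+1/2}, b_{i+1/2} ≥ 0` and `a_{i+1/2} + b_{i+1/2} ≤ 1`, the total variation does not
increase.  Here `a i`, `b i` denote `a_{i+1/2}`, `b_{i+1/2}`. -/
theorem harten_tvd
    (v vnew a b : ℤ → ℝ)
    (ha : ∀ i, 0 ≤ a i) (hb : ∀ i, 0 ≤ b i)
    (hab : ∀ i, a i + b i ≤ 1)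
    (hupd : ∀ i, vnew i = v i - a (i - 1) * (v i - v (i - 1)) + b i * (v (i + 1) - v i))
    (hsum : Summable fun i => |v (i + 1) - v i|)
    (hsumnew : Summable fun i => |vnew (i + 1) - vnew i|) :
    (∑' i : ℤ, |vnew (i + 1) - vnew i|) ≤ ∑' i : ℤ, |v (i + 1) - v i| := by
  set D : ℤ → ℝ := fun i => |v (i + 1) - v i| with hDdef
  have hD : ∀ i, 0 ≤ D i := fun i => abs_nonneg _
  have hab0 : ∀ i, 0 ≤ 1 - a i - b i := by
    intro i; have := hab i; linarith
  -- key pointwise bound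
  have key : ∀ i, |vnew (i + 1) - vnew i| ≤
      (1 - a i - b i) * D i + a (i - 1) * D (i - 1) + b (i + 1) * D (i + 1) := by
    intro i
    have e1 : vnew (i + 1) - vnew i =
        (1 - a i - b i) * (v (i + 1) - v i) + a (i - 1) * (v i - v (i - 1))
          + b (i + 1) * (v (i + 1 + 1) - v (i + 1)) := by
      rw [hupd i, hupd (i + 1)]
      have : i + 1 - 1 = i := by ring
      rw [this]; ring
    rw [e1]
    have hDi1 : D (i - 1) = |v i - v (i - 1)| := by
      simp only [hDdef]; norm_num
    calc |(1 - a i - b i) * (v (i + 1) - v i) + a (i - 1) * (v i - v (i - 1))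
          + b (i + 1) * (v (i + 1 + 1) - v (i + 1))|
        ≤ |(1 - a i - b i) * (v (i + 1) - v i) + a (i - 1) * (v i - v (i - 1))|
          + |b (i + 1) * (v (i + 1 + 1) - v (i + 1))| := abs_add_le _ _
      _ ≤ |(1 - a i - b i) * (v (i + 1) - v i)| + |a (i - 1) * (v i - v (i - 1))|
          + |b (i + 1) * (v (i + 1 + 1) - v (i + 1))| := by
            gcongr; exact abs_add_le _ _
      _ = (1 - a i - b i) * D i + a (i - 1) * D (i - 1) + b (i + 1) * D (i + 1) := by
            rw [abs_mul, abs_mul, abs_mul, abs_of_nonneg (hab0 i),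
              abs_of_nonneg (ha (i - 1)), abs_of_nonneg (hb (i + 1)), hDi1]
  -- summability of the three pieces
  have hS1 : Summable fun i => (1 - a i - b i) * D i := by
    apply Summable.of_nonneg_of_le (fun i => mul_nonneg (hab0 i) (hD i))
      (fun i => ?_) hsum
    have := hab0 i; nlinarith [hD i, ha i, hb i]
  have hSa : Summable fun i => a i * D i := by
    apply Summable.of_nonneg_of_le (fun i => mul_nonneg (ha i) (hD i))
      (fun i => ?_) hsum
    have h1 : a i ≤ 1 := by have := hab i; have := hb i; linarith
    nlinarith [hD i]
  have hSb : Summable fun i => b i * D i := by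
    apply Summable.of_nonneg_of_le (fun i => mul_nonneg (hb i) (hD i))
      (fun i => ?_) hsum
    have h1 : b i ≤ 1 := by have := hab i; have := ha i; linarith
    nlinarith [hD i]
  have hS2 : Summable fun i : ℤ => a (i - 1) * D (i - 1) :=
    (Equiv.subRight (1 : ℤ)).summable_iff.mpr hSa
  have hS3 : Summable fun i : ℤ => b (i + 1) * D (i + 1) :=
    (Equiv.addRight (1 : ℤ)).summable_iff.mpr hSb
  have h2eq : (∑' i : ℤ, a (i - 1) * D (i - 1)) = ∑' i, a i * D i :=
    (Equiv.subRight (1 : ℤ)).tsum_eq (fun i => a i * D i)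
  have h3eq : (∑' i : ℤ, b (i + 1) * D (i + 1)) = ∑' i, b i * D i :=
    (Equiv.addRight (1 : ℤ)).tsum_eq (fun i => b i * D i)
  calc (∑' i : ℤ, |vnew (i + 1) - vnew i|)
      ≤ ∑' i : ℤ, ((1 - a i - b i) * D i + a (i - 1) * D (i - 1)
          + b (i + 1) * D (i + 1)) :=
        Summable.tsum_le_tsum key hsumnew ((hS1.add hS2).add hS3)
    _ = (∑' i, (1 - a i - b i) * D i) + (∑' i : ℤ, a (i - 1) * D (i - 1))
          + ∑' i : ℤ, b (i + 1) * D (i + 1) := by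
        rw [Summable.tsum_add (hS1.add hS2) hS3, Summable.tsum_add hS1 hS2]
    _ = (∑' i, (1 - a i - b i) * D i) + (∑' i, a i * D i) + ∑' i, b i * D i := by
        rw [h2eq, h3eq]
    _ = ∑' i, ((1 - a i - b i) * D i + a i * D i + b i * D i) := by
        rw [Summable.tsum_add (hS1.add hSa) hSb, Summable.tsum_add hS1 hSa]
    _ = ∑' i, D i := by
        apply tsum_congr; intro i; ring
end

section
/- Let μ ∈ BV(ℝ) ∩ C¹(ℝ) and let (U_p)_{p∈ℤ} be nonnegative reals with Δx ∑_p U_p ≤ C₀. Define c_{i+1/2} = Δx ∑_{p∈ℤ} μ(x_{i+1/2 − p}) U_p on a grid with spacing Δx. Then ∑_{i∈ℤ} |c_{i+1/2} − c_{i−1/2}| ≤ C₀ TV(μ), uniformly in Δx. -/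
open MeasureTheory

/-- BV bound on the discrete convolution increments: for `μ ∈ BV ∩ C¹` with
`TV(μ) = ∫|μ′|`, nonnegative `(U_p)` with `Δx ∑ U_p ≤ C₀`, and
`c_{i+1/2} = Δx ∑_p μ(x_{i+1/2−p}) U_p` with `x_{i+1/2} = (i+1/2)Δx`, one has
`∑ᵢ |c_{i+1/2} − c_{i−1/2}| ≤ C₀ TV(μ)` uniformly in `Δx`.
Here `c i` denotes `c_{i+1/2}`. -/
theorem discrete_convolution_bv
    (μ : ℝ → ℝ) (U : ℤ → ℝ) (Δx C₀ : ℝ)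
    (hμ : ContDiff ℝ 1 μ)
    (hμ' : Integrable (deriv μ))
    (hΔx : 0 < Δx)
    (hU : ∀ p, 0 ≤ U p) (hUs : Summable U)
    (hC₀ : Δx * (∑' p : ℤ, U p) ≤ C₀)
    (c : ℤ → ℝ)
    (hc : ∀ i : ℤ, c i = Δx * ∑' p : ℤ, μ ((((i : ℝ) - (p : ℝ)) + 1 / 2) * Δx) * U p) :
    (∑' i : ℤ, |c i - c (i - 1)|) ≤ C₀ * ∫ x : ℝ, |deriv μ x| := by
  set f : ℝ → ℝ := fun x => |deriv μ x| with hf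
  have hfi : Integrable f := hμ'.abs
  set T : ℝ := ∫ x : ℝ, f x with hT
  have hTnn : 0 ≤ T := integral_nonneg fun x => abs_nonneg _
  have hμd : Differentiable ℝ μ := hμ.differentiable one_ne_zero
  have hμ'c : Continuous (deriv μ) := hμ.continuous_deriv le_rfl
  -- FTC increment bound
  have key : ∀ a b : ℝ, a ≤ b → |μ b - μ a| ≤ ∫ x in Set.Ioc a b, f x := by
    intro a b hab
    have h1 : ∫ x in a..b, deriv μ x = μ b - μ a :=
      intervalIntegral.integral_deriv_eq_sub (fun x _ => hμd x)
        (hμ'c.intervalIntegrable a b)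
    rw [← h1]
    calc |∫ x in a..b, deriv μ x| ≤ ∫ x in a..b, |deriv μ x| :=
          intervalIntegral.abs_integral_le_integral_abs hab
      _ = ∫ x in Set.Ioc a b, f x := intervalIntegral.integral_of_le hab
  have hsetT : ∀ s : Set ℝ, ∫ x in s, f x ≤ T :=
    fun s => setIntegral_le_integral hfi (Filter.Eventually.of_forall fun x => abs_nonneg _)
  -- boundedness of μ
  set M : ℝ := |μ 0| + T with hM
  have hMb : ∀ x : ℝ, |μ x| ≤ M := by
    intro x
    have h1 : |μ x - μ 0| ≤ T := by
      rcases le_total 0 x with h | h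
      · exact (key 0 x h).trans (hsetT _)
      · rw [abs_sub_comm]
        exact (key x 0 h).trans (hsetT _)
    calc |μ x| = |μ 0 + (μ x - μ 0)| := by ring_nf
      _ ≤ |μ 0| + |μ x - μ 0| := abs_add_le _ _
      _ ≤ M := by rw [hM]; linarith
  -- grid points and cell integrals
  set A : ℤ → ℝ := fun j => ((j : ℝ) - 1 / 2) * Δx with hA
  have hAmono : ∀ {j k : ℤ}, j ≤ k → A j ≤ A k := by
    intro j k hjk
    have : (j : ℝ) ≤ k := by exact_mod_cast hjk
    simp only [hA]
    nlinarith
  set I : ℤ → ℝ := fun j => ∫ x in Set.Ioc (A j) (A (j + 1)), f x with hI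
  have hInn : ∀ j, 0 ≤ I j :=
    fun j => setIntegral_nonneg measurableSet_Ioc fun x _ => abs_nonneg _
  have hIle : ∀ j, I j ≤ T := fun j => hsetT _
  -- the cells tile ℝ
  have hunion : (⋃ j : ℤ, Set.Ioc (A j) (A (j + 1))) = Set.univ := by
    ext x
    simp only [Set.mem_iUnion, Set.mem_Ioc, Set.mem_univ, iff_true]
    refine ⟨⌈x / Δx - 1 / 2⌉, ?_, ?_⟩
    · have h1 : (⌈x / Δx - 1 / 2⌉ : ℝ) < x / Δx - 1 / 2 + 1 := Int.ceil_lt_add_one _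
      have h2 : ((⌈x / Δx - 1 / 2⌉ : ℝ) - 1 / 2) < x / Δx := by linarith
      have := mul_lt_mul_of_pos_right h2 hΔx
      simpa [hA, div_mul_cancel₀ x (ne_of_gt hΔx)] using this
    · have h1 : x / Δx - 1 / 2 ≤ (⌈x / Δx - 1 / 2⌉ : ℝ) := Int.le_ceil _
      have h2 : x / Δx ≤ ((⌈x / Δx - 1 / 2⌉ : ℝ) + 1) - 1 / 2 := by linarith
      have := mul_le_mul_of_nonneg_right h2 (le_of_lt hΔx)
      rw [div_mul_cancel₀ x (ne_of_gt hΔx)] at this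
      simpa [hA] using this
  have hdisj : Pairwise (Function.onFun Disjoint fun j : ℤ => Set.Ioc (A j) (A (j + 1))) := by
    intro j k hjk
    rcases hjk.lt_or_gt with h | h
    · exact Set.Ioc_disjoint_Ioc.mpr
        (le_trans (min_le_left _ _) (le_trans (hAmono h) (le_max_right _ _)))
    · exact Set.Ioc_disjoint_Ioc.mpr
        (le_trans (min_le_right _ _) (le_trans (hAmono h) (le_max_left _ _)))
  have hIsum : HasSum I T := by
    have := hasSum_integral_iUnion (f := f) (μ := volume)
      (fun j : ℤ => measurableSet_Ioc (a := A j) (b := A (j + 1))) hdisj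
      (by rw [hunion]; exact hfi.integrableOn)
    rwa [hunion, Measure.restrict_univ] at this
  -- summand functions
  set g : ℤ → ℤ → ℝ := fun i p => μ ((((i : ℝ) - (p : ℝ)) + 1 / 2) * Δx) * U p with hg
  have hgs : ∀ i, Summable (g i) := by
    intro i
    apply Summable.of_abs
    apply Summable.of_nonneg_of_le (fun p => abs_nonneg _) _ (hUs.mul_left M)
    intro p
    rw [hg]
    simp only
    rw [abs_mul, abs_of_nonneg (hU p)]
    exact mul_le_mul_of_nonneg_right (hMb _) (hU p)
  -- pointwise bound on increments of g
  have hgb : ∀ i p : ℤ, |g i p - g (i - 1) p| ≤ I (i - p) * U p := by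
    intro i p
    have e1 : (((i : ℝ) - (p : ℝ)) + 1 / 2) * Δx = A (i - p + 1) := by
      simp only [hA]; push_cast; ring
    have e2 : ((((i - 1 : ℤ) : ℝ) - (p : ℝ)) + 1 / 2) * Δx = A (i - p) := by
      simp only [hA]; push_cast; ring
    have : g i p - g (i - 1) p = (μ (A (i - p + 1)) - μ (A (i - p))) * U p := by
      rw [hg]; simp only; rw [e1, e2]; ring
    rw [this, abs_mul, abs_of_nonneg (hU p)]
    exact mul_le_mul_of_nonneg_right (key _ _ (hAmono (by omega))) (hU p)
  -- summability of the double family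
  have hFs : Summable fun q : ℤ × ℤ => I (q.2 - q.1) * U q.1 := by
    rw [summable_prod_of_nonneg (fun q => mul_nonneg (hInn _) (hU _))]
    constructor
    · intro p
      exact (((Equiv.subRight p).hasSum_iff.mpr hIsum).mul_right (U p)).summable
    · apply Summable.congr (hUs.mul_left T)
      intro p
      exact (((Equiv.subRight p).hasSum_iff.mpr hIsum).mul_right (U p)).tsum_eq.symm
  have hfib : ∀ i : ℤ, Summable fun p : ℤ => I (i - p) * U p := by
    intro i
    have := hFs.prod_symm
    exact ((summable_prod_of_nonneg
      (f := fun q : ℤ × ℤ => I (q.1 - q.2) * U q.2)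
      (fun q => mul_nonneg (hInn _) (hU _))).mp this).1 i
  -- majorant
  set G : ℤ → ℝ := fun i => Δx * ∑' p : ℤ, I (i - p) * U p with hG
  have hcb : ∀ i : ℤ, |c i - c (i - 1)| ≤ G i := by
    intro i
    have hdiff : c i - c (i - 1) = Δx * ∑' p : ℤ, (g i p - g (i - 1) p) := by
      rw [hc i, hc (i - 1), ← mul_sub, Summable.tsum_sub (hgs i) (hgs (i - 1))]
    rw [hdiff, hG, abs_mul, abs_of_pos hΔx]
    apply mul_le_mul_of_nonneg_left _ (le_of_lt hΔx)
    calc |∑' p : ℤ, (g i p - g (i - 1) p)| ≤ ∑' p : ℤ, |g i p - g (i - 1) p| := by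
          simpa using norm_tsum_le_tsum_norm (f := fun p => g i p - g (i - 1) p)
            (by simpa using ((hgs i).sub (hgs (i - 1))).abs)
      _ ≤ ∑' p : ℤ, I (i - p) * U p :=
          Summable.tsum_le_tsum (fun p => hgb i p) ((hgs i).sub (hgs (i - 1))).abs (hfib i)
  have hGs : Summable G := by
    apply Summable.mul_left
    have := hFs.prod_symm
    exact ((summable_prod_of_nonneg
      (f := fun q : ℤ × ℤ => I (q.1 - q.2) * U q.2)
      (fun q => mul_nonneg (hInn _) (hU _))).mp this).2
  have hGsum : (∑' i : ℤ, G i) ≤ C₀ * T := by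
    have h1 : (∑' i : ℤ, G i) = Δx * ∑' (i : ℤ) (p : ℤ), I (i - p) * U p := by
      rw [hG, tsum_mul_left]
    have h2 : (∑' (i : ℤ) (p : ℤ), I (i - p) * U p)
        = ∑' (p : ℤ) (i : ℤ), I (i - p) * U p :=
      Summable.tsum_comm' (f := fun p i => I (i - p) * U p) hFs
        (fun p => (((Equiv.subRight p).hasSum_iff.mpr hIsum).mul_right (U p)).summable) hfib
    have h3 : (∑' (p : ℤ) (i : ℤ), I (i - p) * U p) = T * ∑' p : ℤ, U p := by
      rw [← tsum_mul_left]
      congr 1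
      ext p
      exact (((Equiv.subRight p).hasSum_iff.mpr hIsum).mul_right (U p)).tsum_eq
    rw [h1, h2, h3]
    calc Δx * (T * ∑' p : ℤ, U p) = (Δx * ∑' p : ℤ, U p) * T := by ring
      _ ≤ C₀ * T := mul_le_mul_of_nonneg_right hC₀ hTnn
  calc (∑' i : ℤ, |c i - c (i - 1)|) ≤ ∑' i : ℤ, G i :=
        Summable.tsum_le_tsum hcb
          (Summable.of_nonneg_of_le (fun i => abs_nonneg _) hcb hGs) hGs
    _ ≤ C₀ * T := hGsum
end
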